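/- Let A = ℂ[a, b, x, y, z] and let ξ be the ℂ-derivation of A defined by ξ(a) = 0, ξ(b) = 0, ξ(x) = a², ξ(y) = ax + b, ξ(z) = y. Set I₁ = a, I₂ = b, I₃ = ax² + 2bx − 2a²y, I₄ = 2ax³ + 3bx² − 6a²xy + 6a⁴z. Then for every polynomial P ∈ A with ξ(P) = 0 there exists a natural number m such that a^m·P belongs to the ℂ-subalgebra of A generated by I₁, I₂, I₃, I₄. That is, the algebra of polynomial absolute invariants of ξ is generated by I₁, I₂, I₃, I₄ after localization at I₁ = a. -/
import Mathlib


open MvPolynomial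

/-- The polynomial ring `A = ℂ[a, b, x, y, z]`, with variable indices
`0 ↦ a`, `1 ↦ b`, `2 ↦ x`, `3 ↦ y`, `4 ↦ z`. -/
abbrev A5 : Type := MvPolynomial (Fin 5) ℂ

/-- `I₁ = a`. -/
noncomputable def I1 : A5 := X 0
/-- `I₂ = b`. -/
noncomputable def I2 : A5 := X 1
/-- `I₃ = ax² + 2bx − 2a²y`. -/
noncomputable def I3 : A5 := X 0 * X 2 ^ 2 + 2 * X 1 * X 2 - 2 * X 0 ^ 2 * X 3
/-- `I₄ = 2ax³ + 3bx² − 6a²xy + 6a⁴z`. -/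
noncomputable def I4 : A5 :=
  2 * X 0 * X 2 ^ 3 + 3 * X 1 * X 2 ^ 2 - 6 * X 0 ^ 2 * X 2 * X 3 + 6 * X 0 ^ 4 * X 4

namespace Aux14

noncomputable section

/-- Flow of the variables: `X i ↦ exp(t ξ) (X i)`. -/
def flowv : Fin 5 → Polynomial A5 :=
  ![Polynomial.C (X 0),
    Polynomial.C (X 1),
    Polynomial.C (X 2) + Polynomial.C (X 0 ^ 2) * Polynomial.X,
    Polynomial.C (X 3) + Polynomial.C (X 0 * X 2 + X 1) * Polynomial.X
      + Polynomial.C (MvPolynomial.C (1/2 : ℂ) * X 0 ^ 3) * Polynomial.X ^ 2,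
    Polynomial.C (X 4) + Polynomial.C (X 3) * Polynomial.X
      + Polynomial.C (MvPolynomial.C (1/2 : ℂ) * (X 0 * X 2 + X 1)) * Polynomial.X ^ 2
      + Polynomial.C (MvPolynomial.C (1/6 : ℂ) * X 0 ^ 3) * Polynomial.X ^ 3]

/-- The flow homomorphism. -/
def Fl : A5 →ₐ[ℂ] Polynomial A5 := MvPolynomial.aeval flowv

lemma h2inv : (Polynomial.C (MvPolynomial.C (2⁻¹ : ℂ)) : Polynomial A5) * Polynomial.C (2 : A5) = 1 := by
  rw [← map_mul, show (2 : A5) = MvPolynomial.C (2 : ℂ) from (map_ofNat _ 2).symm, ← map_mul]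
  norm_num

lemma h6inv3 : (Polynomial.C (MvPolynomial.C (6⁻¹ : ℂ)) : Polynomial A5) * Polynomial.C (3 : A5)
    = Polynomial.C (MvPolynomial.C (2⁻¹ : ℂ)) := by
  rw [← map_mul, show (3 : A5) = MvPolynomial.C (3 : ℂ) from (map_ofNat _ 3).symm, ← map_mul]
  norm_num

lemma h6inv2 : (Polynomial.C (MvPolynomial.C (6⁻¹ : ℂ)) : Polynomial A5) * Polynomial.C (2 : A5)
    = Polynomial.C (MvPolynomial.C (3⁻¹ : ℂ)) := by
  rw [← map_mul, show (2 : A5) = MvPolynomial.C (2 : ℂ) from (map_ofNat _ 2).symm, ← map_mul]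
  norm_num

lemma deriv_flowv
    (ξ : Derivation ℂ A5 A5)
    (ha : ξ (X 0) = 0) (hb : ξ (X 1) = 0) (hx : ξ (X 2) = X 0 ^ 2)
    (hy : ξ (X 3) = X 0 * X 2 + X 1) (hz : ξ (X 4) = X 3) (i : Fin 5) :
    Polynomial.derivative (flowv i) = Fl (ξ (X i)) := by
  fin_cases i
  · simp [flowv, Fl, ha, hb, hx, hy, hz, Polynomial.derivative_pow, map_add, map_mul]
  · simp [flowv, Fl, ha, hb, hx, hy, hz, Polynomial.derivative_pow, map_add, map_mul]
  · simp [flowv, Fl, ha, hb, hx, hy, hz, Polynomial.derivative_pow, map_add, map_mul]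
  · simp [flowv, Fl, ha, hb, hx, hy, hz, Polynomial.derivative_pow, map_add, map_mul]
    linear_combination (Polynomial.C (X 0) ^ 3 * Polynomial.X) * h2inv
  · simp [flowv, Fl, ha, hb, hx, hy, hz, Polynomial.derivative_pow, map_add, map_mul]
    linear_combination ((Polynomial.C (X 0) * Polynomial.C (X 2) + Polynomial.C (X 1)) * Polynomial.X) * h2inv
      + (Polynomial.C (X 0) ^ 3 * Polynomial.X ^ 2) * h6inv3

lemma flow_deriv
    (ξ : Derivation ℂ A5 A5)
    (ha : ξ (X 0) = 0) (hb : ξ (X 1) = 0) (hx : ξ (X 2) = X 0 ^ 2)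
    (hy : ξ (X 3) = X 0 * X 2 + X 1) (hz : ξ (X 4) = X 3) (P : A5) :
    Polynomial.derivative (Fl P) = Fl (ξ P) := by
  induction P using MvPolynomial.induction_on with
  | C r =>
      rw [show (C r : A5) = algebraMap ℂ A5 r from rfl, Derivation.map_algebraMap, map_zero,
        AlgHom.commutes]
      simp [Polynomial.algebraMap_apply]
  | add p q hp hq => rw [map_add, map_add, hp, hq, map_add, map_add]
  | mul_X p i hp =>
      rw [map_mul, Polynomial.derivative_mul, hp,
        show Fl (X i) = flowv i from MvPolynomial.aeval_X _ _,
        Derivation.leibniz, smul_eq_mul, smul_eq_mul, map_add, map_mul, map_mul,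
        deriv_flowv ξ ha hb hx hy hz i,
        show Fl (X i) = flowv i from MvPolynomial.aeval_X _ _]
      ring

lemma flow_const
    (ξ : Derivation ℂ A5 A5)
    (ha : ξ (X 0) = 0) (hb : ξ (X 1) = 0) (hx : ξ (X 2) = X 0 ^ 2)
    (hy : ξ (X 3) = X 0 * X 2 + X 1) (hz : ξ (X 4) = X 3) (P : A5) (hP : ξ P = 0) :
    Fl P = Polynomial.C P := by
  have h1 : Polynomial.derivative (Fl P) = 0 := by
    rw [flow_deriv ξ ha hb hx hy hz P, hP, map_zero]
  have h2 := Polynomial.eq_C_of_derivative_eq_zero h1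
  have hE : ∀ Q : A5, Polynomial.aeval (0 : A5) (Fl Q) = Q := by
    intro Q
    have hcomp : (((Polynomial.aeval (0 : A5)).restrictScalars ℂ).comp Fl) = AlgHom.id ℂ A5 := by
      apply MvPolynomial.algHom_ext
      intro i
      fin_cases i <;> simp [Fl, flowv]
    exact congrArg (fun f => f Q) hcomp
  have h3 := hE P
  rw [h2, Polynomial.aeval_C] at h3
  simp only [Algebra.algebraMap_self, RingHom.id_apply] at h3
  rw [h2, h3]

/-- Weights: a ↦ 1, b ↦ 5, x ↦ 4, y ↦ 7, z ↦ 9. -/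
def wt : Fin 5 → ℕ := ![1, 5, 4, 7, 9]

/-- Weighted degree of a monomial exponent. -/
def Wd (s : Fin 5 →₀ ℕ) : ℕ := ∑ i, wt i * s i

/-- Scaling map `X i ↦ (c·a)^(wt i) · X i`. -/
def scl (c : ℂ) : A5 →ₐ[ℂ] A5 :=
  MvPolynomial.aeval fun i => (MvPolynomial.C c * X 0) ^ wt i * X i

lemma scl_monomial (c : ℂ) (s : Fin 5 →₀ ℕ) (k : ℂ) :
    scl c (monomial s k) = (MvPolynomial.C c * X 0) ^ Wd s * monomial s k := by
  rw [scl, aeval_monomial, monomial_eq, Finsupp.prod_fintype _ _ (fun i => pow_zero _),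
    Finsupp.prod_fintype _ _ (fun i => pow_zero _)]
  simp_rw [mul_pow, ← pow_mul]
  rw [Finset.prod_mul_distrib, Finset.prod_mul_distrib, Finset.prod_pow_eq_pow_sum,
    Finset.prod_pow_eq_pow_sum]
  rw [show (algebraMap ℂ A5) k = MvPolynomial.C k from rfl, Wd]
  ring

/-- Substituted time `t = -c²x`. -/
def Tc (c : ℂ) : A5 := -(MvPolynomial.C (c ^ 2) * X 2)

/-- The composite `eval_{t = -c²x} ∘ (scaling on coefficients) ∘ flow`. -/
def Gc (c : ℂ) : A5 →ₐ[ℂ] A5 :=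
  ((Polynomial.aeval (Tc c)).restrictScalars ℂ).comp ((Polynomial.mapAlgHom (scl c)).comp Fl)

lemma Gc_inv
    (ξ : Derivation ℂ A5 A5)
    (ha : ξ (X 0) = 0) (hb : ξ (X 1) = 0) (hx : ξ (X 2) = X 0 ^ 2)
    (hy : ξ (X 3) = X 0 * X 2 + X 1) (hz : ξ (X 4) = X 3) (c : ℂ) (P : A5) (hP : ξ P = 0) :
    Gc c P = scl c P := by
  show (Polynomial.aeval (Tc c)) (Polynomial.mapAlgHom (scl c) (Fl P)) = scl c P
  rw [flow_const ξ ha hb hx hy hz P hP]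
  simp [Polynomial.mapAlgHom]

lemma k2 : (MvPolynomial.C (2⁻¹ : ℂ) : A5) * 2 = 1 := by
  rw [show (2 : A5) = MvPolynomial.C (2 : ℂ) from (map_ofNat _ 2).symm, ← map_mul]
  norm_num

lemma k6 : (MvPolynomial.C (6⁻¹ : ℂ) : A5) * 6 = 1 := by
  rw [show (6 : A5) = MvPolynomial.C (6 : ℂ) from (map_ofNat _ 6).symm, ← map_mul]
  norm_num

lemma Gc_X_mem (c : ℂ) (i : Fin 5) :
    Gc c (X i) ∈ Algebra.adjoin ℂ ({I1, I2, I3, I4} : Set A5) := by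
  have hI1 : I1 ∈ Algebra.adjoin ℂ ({I1, I2, I3, I4} : Set A5) :=
    Algebra.subset_adjoin (by simp)
  have hI2 : I2 ∈ Algebra.adjoin ℂ ({I1, I2, I3, I4} : Set A5) :=
    Algebra.subset_adjoin (by simp)
  have hI3 : I3 ∈ Algebra.adjoin ℂ ({I1, I2, I3, I4} : Set A5) :=
    Algebra.subset_adjoin (by simp)
  have hI4 : I4 ∈ Algebra.adjoin ℂ ({I1, I2, I3, I4} : Set A5) :=
    Algebra.subset_adjoin (by simp)
  fin_cases i
  · show Gc c (X 0) ∈ _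
    have h : Gc c (X 0) = algebraMap ℂ A5 c * (I1 * I1) := by
      simp [Gc, Fl, flowv, scl, Tc, wt, I1, map_pow]
      ring
    rw [h]
    exact mul_mem (Subalgebra.algebraMap_mem _ c) (mul_mem hI1 hI1)
  · show Gc c (X 1) ∈ _
    have h : Gc c (X 1) = algebraMap ℂ A5 (c ^ 5) * (I1 ^ 5 * I2) := by
      simp [Gc, Fl, flowv, scl, Tc, wt, I1, I2, map_pow]
      ring
    rw [h]
    exact mul_mem (Subalgebra.algebraMap_mem _ _) (mul_mem (pow_mem hI1 5) hI2)
  · show Gc c (X 2) ∈ _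
    have h : Gc c (X 2) = 0 := by
      simp [Gc, Fl, flowv, scl, Tc, wt, map_pow]
      ring
    rw [h]; exact zero_mem _
  · show Gc c (X 3) ∈ _
    have h : Gc c (X 3) = algebraMap ℂ A5 (-(2⁻¹) * c ^ 7) * (I1 ^ 5 * I3) := by
      simp [Gc, Fl, flowv, scl, Tc, wt, I1, I3, map_pow]
      linear_combination (MvPolynomial.C c ^ 7 *
        (X 0 ^ 6 * X 2 ^ 2 + X 0 ^ 5 * X 1 * X 2 - X 0 ^ 7 * X 3)) * k2
    rw [h]
    exact mul_mem (Subalgebra.algebraMap_mem _ _) (mul_mem (pow_mem hI1 5) hI3)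
  · show Gc c (X 4) ∈ _
    have h : Gc c (X 4) = algebraMap ℂ A5 (6⁻¹ * c ^ 9) * (I1 ^ 5 * I4) := by
      simp [Gc, Fl, flowv, scl, Tc, wt, I1, I4, map_pow]
      linear_combination (MvPolynomial.C c ^ 9 * (3 * MvPolynomial.C (6⁻¹ : ℂ)) *
          (X 0 ^ 6 * X 2 ^ 3 + X 0 ^ 5 * X 1 * X 2 ^ 2)) * k2
        + (MvPolynomial.C c ^ 9 * (X 0 ^ 7 * X 2 * X 3 - X 0 ^ 9 * X 4)
          - MvPolynomial.C c ^ 9 * MvPolynomial.C (2⁻¹ : ℂ) *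
            (X 0 ^ 6 * X 2 ^ 3 + X 0 ^ 5 * X 1 * X 2 ^ 2)) * k6
    rw [h]
    exact mul_mem (Subalgebra.algebraMap_mem _ _) (mul_mem (pow_mem hI1 5) hI4)

lemma vdm {V : Type*} [AddCommGroup V] [Module ℂ V] (B : Finset ℕ) (u : ℕ → V)
    (h : ∀ c : ℂ, ∑ d ∈ B, c ^ d • u d = 0) : ∀ d ∈ B, u d = 0 := by
  intro d hd
  rw [← Module.forall_dual_apply_eq_zero_iff ℂ]
  intro φ
  have hp : (∑ e ∈ B, Polynomial.C (φ (u e)) * Polynomial.X ^ e : Polynomial ℂ) = 0 := by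
    apply Polynomial.zero_of_eval_zero
    intro c
    have h2 := congrArg φ (h c)
    simp only [map_sum, map_smul, map_zero, smul_eq_mul] at h2
    rw [Polynomial.eval_finset_sum]
    simp only [Polynomial.eval_mul, Polynomial.eval_C, Polynomial.eval_pow, Polynomial.eval_X]
    rw [← h2]
    exact Finset.sum_congr rfl fun e _ => mul_comm _ _
  have h3 := congrArg (fun p => Polynomial.coeff p d) hp
  simp only [Polynomial.finset_sum_coeff, Polynomial.coeff_C_mul, Polynomial.coeff_X_pow,
    Polynomial.coeff_zero, mul_ite, mul_one, mul_zero] at h3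
  rwa [Finset.sum_ite_eq B d (fun e => φ (u e)), if_pos hd] at h3

end

end Aux14

/-- Let `ξ` be the ℂ-derivation of `A = ℂ[a, b, x, y, z]` with
`ξ(a) = 0`, `ξ(b) = 0`, `ξ(x) = a²`, `ξ(y) = ax + b`, `ξ(z) = y`.  Then for every `P` with
`ξ(P) = 0` there exists `m ∈ ℕ` such that `a^m·P` belongs to the ℂ-subalgebra generated by
`I₁, I₂, I₃, I₄`: the algebra of polynomial absolute invariants of `ξ` is generated by
`I₁, I₂, I₃, I₄` after localization at `I₁ = a`. -/
theorem invariants_generated_after_localization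
    (ξ : Derivation ℂ A5 A5)
    (ha : ξ (X 0) = 0) (hb : ξ (X 1) = 0) (hx : ξ (X 2) = X 0 ^ 2)
    (hy : ξ (X 3) = X 0 * X 2 + X 1) (hz : ξ (X 4) = X 3) :
    ∀ P : A5, ξ P = 0 →
      ∃ m : ℕ, X 0 ^ m * P ∈ Algebra.adjoin ℂ ({I1, I2, I3, I4} : Set A5) := by
  intro P hP
  classical
  set S := Algebra.adjoin ℂ ({I1, I2, I3, I4} : Set A5) with hSdef
  have hI1 : I1 ∈ S := Algebra.subset_adjoin (by simp)
  have hGmem : ∀ c : ℂ, ∀ Q : A5, Aux14.Gc c Q ∈ S := by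
    intro c Q
    induction Q using MvPolynomial.induction_on with
    | C r =>
        rw [show (C r : A5) = algebraMap ℂ A5 r from rfl, AlgHom.commutes]
        exact Subalgebra.algebraMap_mem _ r
    | add p q hp hq => rw [map_add]; exact add_mem hp hq
    | mul_X p i hp => rw [map_mul]; exact mul_mem hp (Aux14.Gc_X_mem c i)
  have key : ∀ c : ℂ, Aux14.scl c P ∈ S := by
    intro c
    rw [← Aux14.Gc_inv ξ ha hb hx hy hz c P hP]
    exact hGmem c P
  have hexp : ∀ c : ℂ, Aux14.scl c P
      = ∑ s ∈ P.support, (MvPolynomial.C c) ^ Aux14.Wd s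
          * (X 0 ^ Aux14.Wd s * monomial s (coeff s P)) := by
    intro c
    conv_lhs => rw [P.as_sum]
    rw [map_sum]
    refine Finset.sum_congr rfl fun s hs => ?_
    rw [Aux14.scl_monomial, mul_pow]
    ring
  set B : Finset ℕ := P.support.image Aux14.Wd with hB
  set u : ℕ → A5 := fun d => ∑ s ∈ P.support.filter (fun s => Aux14.Wd s = d),
    X 0 ^ d * monomial s (coeff s P) with hu
  have hfib : ∀ c : ℂ, ∑ d ∈ B, (c : ℂ) ^ d • u d = Aux14.scl c P := by
    intro c
    rw [hexp c, ← Finset.sum_fiberwise_of_maps_to (g := Aux14.Wd)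
      (fun s hs => Finset.mem_image_of_mem _ hs)]
    refine Finset.sum_congr rfl fun d hd => ?_
    rw [hu, Finset.smul_sum]
    refine Finset.sum_congr rfl fun s hs => ?_
    have hws : Aux14.Wd s = d := (Finset.mem_filter.1 hs).2
    rw [hws, MvPolynomial.smul_eq_C_mul, map_pow]
  have hmem : ∀ d ∈ B, u d ∈ S := by
    have h0 : ∀ c : ℂ, ∑ d ∈ B,
        c ^ d • ((Subalgebra.toSubmodule S).mkQ (u d)) = 0 := by
      intro c
      have hms : (∑ d ∈ B, c ^ d • ((Subalgebra.toSubmodule S).mkQ (u d)))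
          = (Subalgebra.toSubmodule S).mkQ (∑ d ∈ B, c ^ d • u d) := by
        rw [map_sum]
        exact Finset.sum_congr rfl fun d _ => (map_smul _ _ _).symm
      rw [hms, hfib c, Submodule.mkQ_apply, Submodule.Quotient.mk_eq_zero]
      exact (Subalgebra.mem_toSubmodule S).2 (key c)
    intro d hd
    have h1 := Aux14.vdm B _ h0 d hd
    rw [Submodule.mkQ_apply, Submodule.Quotient.mk_eq_zero] at h1
    exact (Subalgebra.mem_toSubmodule S).1 h1
  refine ⟨B.sup id, ?_⟩
  have hPm : X 0 ^ (B.sup id) * P = ∑ d ∈ B, X 0 ^ (B.sup id - d) * u d := by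
    conv_lhs => rw [P.as_sum]
    rw [Finset.mul_sum, ← Finset.sum_fiberwise_of_maps_to (g := Aux14.Wd)
      (fun s hs => Finset.mem_image_of_mem _ hs)]
    refine Finset.sum_congr rfl fun d hd => ?_
    rw [hu, Finset.mul_sum]
    refine Finset.sum_congr rfl fun s hs => ?_
    have hws : Aux14.Wd s = d := (Finset.mem_filter.1 hs).2
    have hdle : d ≤ B.sup id := Finset.le_sup (f := id) hd
    rw [← mul_assoc, ← pow_add, Nat.sub_add_cancel hdle]
  rw [hPm]
  exact sum_mem fun d hd => mul_mem (pow_mem hI1 _) (hmem d hd)
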